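/- Let α ∈ (0,1), N a positive integer, and J_N the weight equal to e^{αN} on (-∞,-N), e^{-αx} on [-N,0], and 1 on (0,∞). For x ∈ [-N,0], the quantity f(x) = J_N(x) ∫_ℝ e^{-|x-y|}/J_N(y) dy satisfies f(x) ≤ (3-α²)/(1-α²). -/

import Mathlib

open MeasureTheory Real

/-- The weight function `J_N`. -/
noncomputable def J (α : ℝ) (N : ℕ) (x : ℝ) : ℝ :=
  if x < -(N : ℝ) then Real.exp (α * N)
  else if x ≤ 0 then Real.exp (-α * x)
  else 1

lemma J_pos (α : ℝ) (N : ℕ) (y : ℝ) : 0 < J α N y := by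
  unfold J; split_ifs <;> positivity

lemma integral_exp_mul (c a b : ℝ) (hc : c ≠ 0) :
    ∫ y in a..b, Real.exp (c * y) = (Real.exp (c * b) - Real.exp (c * a)) / c := by
  have hd : ∀ y ∈ Set.uIcc a b,
      HasDerivAt (fun u => Real.exp (c * u) / c) (Real.exp (c * y)) y := by
    intro y _
    have h1 : HasDerivAt (fun u : ℝ => c * u) c y := by
      simpa using (hasDerivAt_id y).const_mul c
    have h2 := ((Real.hasDerivAt_exp (c * y)).comp y h1).div_const c
    rw [mul_div_cancel_right₀ _ hc] at h2
    exact h2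
  rw [intervalIntegral.integral_eq_sub_of_hasDerivAt hd
    ((Real.continuous_exp.comp (continuous_const.mul continuous_id)).intervalIntegrable a b)]
  ring

lemma integral_exp_neg_mul_Ioi {b : ℝ} (hb : 0 < b) (x : ℝ) :
    ∫ y in Set.Ioi x, Real.exp (-b * y) = Real.exp (-b * x) / b := by
  simp only [neg_mul, ← neg_mul_eq_neg_mul]
  have h := integral_comp_mul_left_Ioi (fun u => Real.exp (-u)) x hb
  simp only [smul_eq_mul] at h
  rw [h, integral_exp_neg_Ioi]
  rw [div_eq_inv_mul]

/-- Case 2 (`x ∈ [-N,0]`) of the weighted convolution estimate. -/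
theorem JN_case2 (α : ℝ) (hα : α ∈ Set.Ioo (0:ℝ) 1) (N : ℕ) (hN : 0 < N)
    (x : ℝ) (hx : x ∈ Set.Icc (-(N : ℝ)) 0) :
    J α N x * (∫ y : ℝ, Real.exp (-|x - y|) / J α N y) ≤ (3 - α^2) / (1 - α^2) := by
  obtain ⟨hα0, hα1⟩ := hα
  obtain ⟨hxN, hx0⟩ := hx
  have hNpos : (0:ℝ) < N := by exact_mod_cast hN
  have hc1 : (0:ℝ) < 1 + α := by linarith
  have hc2 : (0:ℝ) < 1 - α := by linarith
  have hJx : J α N x = Real.exp (-α * x) := by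
    unfold J; rw [if_neg (not_lt.mpr hxN), if_pos hx0]
  set h : ℝ → ℝ := fun y =>
    if y ≤ -(N:ℝ) then Real.exp (y + N)
    else if y ≤ x then Real.exp ((1+α)*(y-x))
    else Real.exp (-((1-α)*(y-x))) with hh
  -- descriptions of h on the three regions
  have h1 : Set.EqOn h (fun y => Real.exp (N:ℝ) * Real.exp y) (Set.Iic (-(N:ℝ))) := by
    intro y hy
    simp only [hh]
    rw [if_pos (show y ≤ -(N:ℝ) from hy), ← Real.exp_add]
    congr 1; ring
  have h2 : Set.EqOn h (fun y => Real.exp (-((1+α)*x)) * Real.exp ((1+α)*y))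
      (Set.Ioc (-(N:ℝ)) x) := by
    intro y hy
    simp only [hh]
    rw [if_neg (not_le.mpr hy.1), if_pos hy.2, ← Real.exp_add]
    congr 1; ring
  have h3 : Set.EqOn h (fun y => Real.exp ((1-α)*x) * Real.exp (-(1-α)*y))
      (Set.Ioi x) := by
    intro y hy
    simp only [hh]
    rw [if_neg (by simp only [Set.mem_Ioi] at hy; push_neg; linarith),
      if_neg (not_le.mpr hy), ← Real.exp_add]
    congr 1; ring
  -- integrability
  have int1 : IntegrableOn h (Set.Iic (-(N:ℝ))) := by
    rw [integrableOn_congr_fun h1 measurableSet_Iic]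
    exact (integrableOn_exp_Iic _).const_mul _
  have int2 : IntegrableOn h (Set.Ioc (-(N:ℝ)) x) := by
    rw [integrableOn_congr_fun h2 measurableSet_Ioc]
    exact Continuous.integrableOn_Ioc (by continuity)
  have int3 : IntegrableOn h (Set.Ioi x) := by
    rw [integrableOn_congr_fun h3 measurableSet_Ioi]
    exact (exp_neg_integrableOn_Ioi x hc2).const_mul (Real.exp ((1-α)*x))
  have int23 : IntegrableOn h (Set.Ioi (-(N:ℝ))) := by
    rw [← Set.Ioc_union_Ioi_eq_Ioi hxN]
    exact int2.union int3
  have hint : Integrable h := by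
    rw [← integrableOn_univ, ← Set.Iic_union_Ioi (a := -(N:ℝ))]
    exact int1.union int23
  -- integral bounds on each region
  have I1 : ∫ y in Set.Iic (-(N:ℝ)), h y ≤ 1 := by
    rw [setIntegral_congr_fun measurableSet_Iic h1, integral_const_mul, integral_exp_Iic,
      ← Real.exp_add]
    simp
  have I2 : ∫ y in Set.Ioc (-(N:ℝ)) x, h y ≤ 1 / (1 + α) := by
    rw [setIntegral_congr_fun measurableSet_Ioc h2, integral_const_mul,
      ← intervalIntegral.integral_of_le hxN, integral_exp_mul _ _ _ hc1.ne']
    have e1 : Real.exp (-((1+α)*x)) * Real.exp ((1+α)*x) = 1 := by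
      rw [← Real.exp_add]; simp
    rw [← mul_div_assoc]
    gcongr
    have e2 := mul_pos (Real.exp_pos (-((1+α)*x))) (Real.exp_pos ((1+α)*(-(N:ℝ))))
    nlinarith [e1, e2]
  have I3 : ∫ y in Set.Ioi x, h y ≤ 1 / (1 - α) := by
    rw [setIntegral_congr_fun measurableSet_Ioi h3, integral_const_mul,
      integral_exp_neg_mul_Ioi hc2, ← mul_div_assoc, ← Real.exp_add,
      show (1-α)*x + -(1-α)*x = (0:ℝ) by ring, Real.exp_zero, one_div]
  have Ih : ∫ y, h y ≤ 1 + (1/(1+α) + 1/(1-α)) := by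
    rw [← intervalIntegral.integral_Iic_add_Ioi int1 int23]
    have hsplit : ∫ y in Set.Ioi (-(N:ℝ)), h y
        = (∫ y in Set.Ioc (-(N:ℝ)) x, h y) + ∫ y in Set.Ioi x, h y := by
      rw [← setIntegral_union (Set.Ioc_disjoint_Ioi le_rfl) measurableSet_Ioi int2 int3,
        Set.Ioc_union_Ioi_eq_Ioi hxN]
    rw [hsplit]
    linarith
  -- pointwise bound
  have hbound : ∀ y, Real.exp (-α*x) * (Real.exp (-|x - y|) / J α N y) ≤ h y := by
    intro y
    rcases le_or_gt y (-(N:ℝ)) with hy | hy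
    · have hJy : J α N y = Real.exp (α * N) := by
        unfold J
        split_ifs with hb1 hb2
        · rfl
        · have : y = -(N:ℝ) := le_antisymm hy (not_lt.mp hb1)
          rw [this]; ring_nf
        · exact absurd (by linarith : y ≤ (0:ℝ)) hb2
      rw [hJy, ← Real.exp_sub, ← Real.exp_add]
      simp only [hh]
      rw [if_pos hy, abs_of_nonneg (by linarith : (0:ℝ) ≤ x - y), Real.exp_le_exp]
      nlinarith [mul_le_mul_of_nonneg_left (show -x ≤ (N:ℝ) by linarith) hα0.le]
    · rcases le_or_gt y 0 with hy0 | hy0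
      · have hJy : J α N y = Real.exp (-α * y) := by
          unfold J; rw [if_neg (not_lt.mpr hy.le), if_pos hy0]
        rw [hJy, ← Real.exp_sub, ← Real.exp_add]
        simp only [hh]
        rw [if_neg (not_le.mpr hy)]
        rcases le_or_gt y x with hyx | hyx
        · rw [if_pos hyx, abs_of_nonneg (by linarith : (0:ℝ) ≤ x - y)]
          apply le_of_eq; congr 1; ring
        · rw [if_neg (not_le.mpr hyx), abs_of_nonpos (by linarith : x - y ≤ 0)]
          apply le_of_eq; congr 1; ring
      · have hJy : J α N y = 1 := by
          unfold J; rw [if_neg (by push_neg; linarith), if_neg (not_le.mpr hy0)]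
        rw [hJy, div_one, ← Real.exp_add]
        simp only [hh]
        rw [if_neg (by push_neg; linarith), if_neg (by push_neg; linarith),
          abs_of_nonpos (by linarith : x - y ≤ 0), Real.exp_le_exp]
        nlinarith [mul_pos hα0 hy0]
  have hnn : ∀ y, 0 ≤ Real.exp (-α*x) * (Real.exp (-|x - y|) / J α N y) := by
    intro y
    have := J_pos α N y
    positivity
  calc J α N x * (∫ y : ℝ, Real.exp (-|x - y|) / J α N y)
      = ∫ y : ℝ, Real.exp (-α*x) * (Real.exp (-|x - y|) / J α N y) := by
        rw [hJx]; exact (integral_const_mul _ _).symm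
    _ ≤ ∫ y, h y := integral_mono_of_nonneg (Filter.Eventually.of_forall hnn) hint
        (Filter.Eventually.of_forall hbound)
    _ ≤ 1 + (1/(1+α) + 1/(1-α)) := Ih
    _ = (3 - α^2) / (1 - α^2) := by
        have : (1:ℝ) - α^2 ≠ 0 := by nlinarith
        field_simp
        ring
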